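/- No possibility measure is default-equivalent to the plausibility measure Pl on {a,b,c} given by Pl(∅) = 0, Pl({a}) = Pl({b}) = Pl({c}) = Pl({b,c}) = Pl({a,c}) = 1/2, Pl({a,b}) = Pl({a,b,c}) = 1: for any possibility measure Poss on {a,b,c}, if Poss({c}) < Poss({a,b}), then Poss({c}) < Poss({a}) or Poss({c}) < Poss({b}); hence no Poss agrees with Pl on strict comparisons of all disjoint pairs. -/
import Mathlib


/-- The plausibility measure on `{a,b,c} = Fin 3` with `Pl ∅ = 0`,
`Pl {a,b} = Pl {a,b,c} = 1`, and all other sets having plausibility `1/2`. -/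
noncomputable def Pl18 (A : Set (Fin 3)) : ℝ :=
  open scoped Classical in
  if A = ∅ then 0 else if (0 : Fin 3) ∈ A ∧ (1 : Fin 3) ∈ A then 1 else 1/2

theorem no_possibility_default_equivalent :
    ∀ Poss : Set (Fin 3) → ℝ,
      Poss Set.univ = 1 → Poss (∅ : Set (Fin 3)) = 0 →
      (∀ A B : Set (Fin 3), Poss (A ∪ B) = max (Poss A) (Poss B)) →
      (Poss {2} < Poss {0, 1} → Poss {2} < Poss {0} ∨ Poss {2} < Poss {1}) ∧
      ¬ (∀ A B : Set (Fin 3), Disjoint A B → (Pl18 A < Pl18 B ↔ Poss A < Poss B)) := by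
  intro Poss _ _ hmax
  have key : Poss {2} < Poss {0, 1} → Poss {2} < Poss {0} ∨ Poss {2} < Poss {1} := by
    intro h
    have : ({0, 1} : Set (Fin 3)) = {0} ∪ {1} := rfl
    rw [this, hmax] at h
    rcases lt_max_iff.mp h with h | h
    · exact Or.inl h
    · exact Or.inr h
  refine ⟨key, fun H => ?_⟩
  have h2 : Pl18 {2} = 1/2 := by
    unfold Pl18
    rw [if_neg, if_neg]
    · rintro ⟨h, -⟩; simp at h
    · intro h; exact absurd h (by simp [Set.eq_empty_iff_forall_notMem])
  have h0 : Pl18 {0} = 1/2 := by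
    unfold Pl18
    rw [if_neg, if_neg]
    · rintro ⟨-, h⟩; simp at h
    · intro h; exact absurd h (by simp [Set.eq_empty_iff_forall_notMem])
  have h1 : Pl18 {1} = 1/2 := by
    unfold Pl18
    rw [if_neg, if_neg]
    · rintro ⟨h, -⟩; simp at h
    · intro h; exact absurd h (by simp [Set.eq_empty_iff_forall_notMem])
  have h01 : Pl18 {0, 1} = 1 := by
    unfold Pl18
    rw [if_neg, if_pos]
    · exact ⟨by simp, by simp⟩
    · intro h
      have : (0 : Fin 3) ∈ ({0, 1} : Set (Fin 3)) := by simp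
      rw [h] at this; exact this
  have d1 : Disjoint ({2} : Set (Fin 3)) {0, 1} := by
    simp [Set.disjoint_left]
  have d2 : Disjoint ({2} : Set (Fin 3)) {0} := by
    simp [Set.disjoint_left]
  have d3 : Disjoint ({2} : Set (Fin 3)) {1} := by
    simp [Set.disjoint_left]
  have hlt : Poss {2} < Poss {0, 1} := (H _ _ d1).mp (by rw [h2, h01]; norm_num)
  rcases key hlt with h | h
  · exact absurd ((H _ _ d2).mpr h) (by rw [h2, h0]; simp)
  · exact absurd ((H _ _ d3).mpr h) (by rw [h2, h1]; simp)
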